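/- arXiv:2407.11783 — 3 statements merged into one kernel-verified Lean document; each statement's English description precedes it below -/
import Mathlib

section
/- Let F : 𝔽₂ⁿ → 𝔽₂ⁿ be an APN function. Then for every (a, b) ∈ 𝔽₂ⁿ × 𝔽₂ⁿ with b ≠ F(a), one has 3 · 2^{2n+1} · d_{G_F}(a, b) = ∑_{(u,v) ∈ 𝔽₂ⁿ × 𝔽₂ⁿ} (−1)^{v·b + u·a} · W_F(u,v)³. -/
/-- The vector space `𝔽₂ⁿ`. -/
abbrev V (n : ℕ) := Fin n → ZMod 2

/-- The standard inner product on `𝔽₂ⁿ`, valued in `𝔽₂`. -/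
def ip {n : ℕ} (x y : V n) : ZMod 2 := ∑ i, x i * y i

/-- `F` is almost perfect nonlinear: for `a ≠ 0`, `F (x + a) + F x = b` has at most 2
solutions. -/
def IsAPN {G : Type*} [AddCommGroup G] [Fintype G] [DecidableEq G] (F : G → G) : Prop :=
  ∀ a b : G, a ≠ 0 → (Finset.univ.filter (fun x => F (x + a) + F x = b)).card ≤ 2

/-- The Walsh transform `W_F(u, v) = ∑_x (−1)^(v·F(x) + u·x)`. -/
def walsh {n : ℕ} (F : V n → V n) (u v : V n) : ℤ :=
  ∑ x : V n, (-1 : ℤ) ^ (ip v (F x) + ip u x).val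

/-- The graph `G_F = {(x, F(x)) : x ∈ 𝔽₂ⁿ}` of `F`, as a finite set. -/
def graphF {n : ℕ} (F : V n → V n) : Finset (V n × V n) :=
  Finset.univ.image (fun x => (x, F x))

/-- The exclude multiplicity of `y` w.r.t. `S`: the number of 3-element subsets of `S`
whose elements sum to `y`. -/
def excMult {G : Type*} [AddCommGroup G] [DecidableEq G] (S : Finset G) (y : G) : ℕ :=
  ((S.powersetCard 3).filter (fun T => T.sum id = y)).card

open Finset

lemma chi_add (s t : ZMod 2) : (-1:ℤ)^(s+t).val = (-1:ℤ)^s.val * (-1:ℤ)^t.val := by revert s t; decide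

lemma chi_sum {ι : Type*} (s : Finset ι) (f : ι → ZMod 2) :
    (-1:ℤ)^(∑ i ∈ s, f i).val = ∏ i ∈ s, (-1:ℤ)^(f i).val := by
  induction s using Finset.cons_induction with
  | empty => simp
  | cons a s ha ih => rw [Finset.sum_cons, Finset.prod_cons, chi_add, ih]

lemma ip_add {n : ℕ} (u s t : V n) : ip u (s + t) = ip u s + ip u t := by
  simp [ip, mul_add, Finset.sum_add_distrib]

lemma orth {n : ℕ} (c : V n) :
    ∑ u : V n, (-1:ℤ)^(ip u c).val = if c = 0 then (2:ℤ)^n else 0 := by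
  have h1 : ∀ u : V n, (-1:ℤ)^(ip u c).val = ∏ i, (-1:ℤ)^(u i * c i).val :=
    fun u => chi_sum _ _
  calc ∑ u : V n, (-1:ℤ)^(ip u c).val
      = ∑ u : V n, ∏ i, (-1:ℤ)^(u i * c i).val := Finset.sum_congr rfl fun u _ => h1 u
    _ = ∏ i : Fin n, ∑ t : ZMod 2, (-1:ℤ)^(t * c i).val := (Fintype.prod_sum (κ := fun _ : Fin n => ZMod 2) (fun i t => (-1:ℤ)^(t * c i).val)).symm
    _ = ∏ i : Fin n, (if c i = 0 then (2:ℤ) else 0) := by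
        refine Finset.prod_congr rfl fun i _ => ?_
        have h : ∀ d : ZMod 2, ∑ t : ZMod 2, (-1:ℤ)^(t * d).val = if d = 0 then 2 else 0 := by
          decide
        exact h (c i)
    _ = if c = 0 then (2:ℤ)^n else 0 := by
        by_cases hc : c = 0
        · subst hc; simp [Finset.prod_const]
        · rw [if_neg hc]
          obtain ⟨i, hi⟩ : ∃ i, c i ≠ 0 := by
            by_contra h; push_neg at h; exact hc (funext h)
          exact Finset.prod_eq_zero (Finset.mem_univ i) (if_neg hi)

lemma addself {n : ℕ} (v : V n) : v + v = 0 := by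
  funext i
  exact (by decide : ∀ t : ZMod 2, t + t = 0) (v i)

lemma addcancel {n : ℕ} (a s : V n) : a + s = 0 ↔ s = a := by
  constructor
  · intro h
    have h2 : a + (a + s) = a + 0 := by rw [h]
    rwa [← add_assoc, addself, zero_add, add_zero] at h2
  · intro h; rw [h, addself]

lemma rhs_eq {n : ℕ} (F : V n → V n) (a b : V n) :
    (∑ u : V n, ∑ v : V n, (-1 : ℤ) ^ (ip v b + ip u a).val * walsh F u v ^ 3)
      = 2^(2*n) * ((Finset.univ.filter fun t : V n × V n × V n =>
          t.1 + t.2.1 + t.2.2 = a ∧ F t.1 + F t.2.1 + F t.2.2 = b).card : ℤ) := by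
  have cube : ∀ u v : V n, walsh F u v ^ 3 = ∑ t : V n × V n × V n,
      (-1:ℤ)^(ip v (F t.1) + ip u t.1).val *
        ((-1:ℤ)^(ip v (F t.2.1) + ip u t.2.1).val *
          (-1:ℤ)^(ip v (F t.2.2) + ip u t.2.2).val) := by
    intro u v
    calc walsh F u v ^ 3
        = (∑ x : V n, (-1:ℤ)^(ip v (F x) + ip u x).val) *
            ((∑ y : V n, (-1:ℤ)^(ip v (F y) + ip u y).val) *
              (∑ z : V n, (-1:ℤ)^(ip v (F z) + ip u z).val)) := by rw [walsh]; ring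
      _ = (∑ x : V n, (-1:ℤ)^(ip v (F x) + ip u x).val) *
            (∑ y : V n, ∑ z : V n, (-1:ℤ)^(ip v (F y) + ip u y).val *
              (-1:ℤ)^(ip v (F z) + ip u z).val) := by rw [Finset.sum_mul_sum]
      _ = ∑ x : V n, ∑ y : V n, (-1:ℤ)^(ip v (F x) + ip u x).val *
            ∑ z : V n, ((-1:ℤ)^(ip v (F y) + ip u y).val *
              (-1:ℤ)^(ip v (F z) + ip u z).val) := by rw [Finset.sum_mul_sum]
      _ = ∑ x : V n, ∑ y : V n, ∑ z : V n, (-1:ℤ)^(ip v (F x) + ip u x).val *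
            ((-1:ℤ)^(ip v (F y) + ip u y).val *
              (-1:ℤ)^(ip v (F z) + ip u z).val) := by simp only [Finset.mul_sum]
      _ = _ := by rw [Fintype.sum_prod_type]; simp only [Fintype.sum_prod_type]
  have key : ∀ u v : V n, ∀ t : V n × V n × V n,
      (-1:ℤ)^(ip v b + ip u a).val * ((-1:ℤ)^(ip v (F t.1) + ip u t.1).val *
        ((-1:ℤ)^(ip v (F t.2.1) + ip u t.2.1).val *
          (-1:ℤ)^(ip v (F t.2.2) + ip u t.2.2).val)) =
      (-1:ℤ)^(ip u (a + t.1 + t.2.1 + t.2.2)).val *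
        (-1:ℤ)^(ip v (b + F t.1 + F t.2.1 + F t.2.2)).val := by
    intro u v t
    simp only [ip_add, chi_add]
    ring
  calc (∑ u : V n, ∑ v : V n, (-1 : ℤ) ^ (ip v b + ip u a).val * walsh F u v ^ 3)
      = ∑ u : V n, ∑ v : V n, ∑ t : V n × V n × V n,
          (-1:ℤ)^(ip u (a + t.1 + t.2.1 + t.2.2)).val *
            (-1:ℤ)^(ip v (b + F t.1 + F t.2.1 + F t.2.2)).val := by
        refine Finset.sum_congr rfl fun u _ => Finset.sum_congr rfl fun v _ => ?_
        rw [cube u v, Finset.mul_sum]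
        exact Finset.sum_congr rfl fun t _ => key u v t
    _ = ∑ t : V n × V n × V n, ∑ u : V n, ∑ v : V n,
          (-1:ℤ)^(ip u (a + t.1 + t.2.1 + t.2.2)).val *
            (-1:ℤ)^(ip v (b + F t.1 + F t.2.1 + F t.2.2)).val := by
        rw [Finset.sum_congr rfl fun u (_ : u ∈ Finset.univ) => Finset.sum_comm]
        exact Finset.sum_comm
    _ = ∑ t : V n × V n × V n,
          (∑ u : V n, (-1:ℤ)^(ip u (a + t.1 + t.2.1 + t.2.2)).val) *
            (∑ v : V n, (-1:ℤ)^(ip v (b + F t.1 + F t.2.1 + F t.2.2)).val) := by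
        exact Finset.sum_congr rfl fun t _ => (Finset.sum_mul_sum _ _ _ _).symm
    _ = ∑ t : V n × V n × V n,
          (if t.1 + t.2.1 + t.2.2 = a ∧ F t.1 + F t.2.1 + F t.2.2 = b
            then (2:ℤ)^(2*n) else 0) := by
        refine Finset.sum_congr rfl fun t _ => ?_
        rw [orth, orth]
        have h1 : (a + t.1 + t.2.1 + t.2.2 = 0) ↔ (t.1 + t.2.1 + t.2.2 = a) := by
          rw [add_assoc, add_assoc, ← add_assoc t.1, addcancel]
        have h2 : (b + F t.1 + F t.2.1 + F t.2.2 = 0) ↔ (F t.1 + F t.2.1 + F t.2.2 = b) := by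
          rw [add_assoc, add_assoc, ← add_assoc (F t.1), addcancel]
        simp only [h1, h2]
        by_cases p1 : t.1 + t.2.1 + t.2.2 = a <;>
          by_cases p2 : F t.1 + F t.2.1 + F t.2.2 = b <;>
          simp [p1, p2, two_mul, pow_add]
    _ = 2^(2*n) * ((Finset.univ.filter fun t : V n × V n × V n =>
          t.1 + t.2.1 + t.2.2 = a ∧ F t.1 + F t.2.1 + F t.2.2 = b).card : ℤ) := by
        rw [Finset.sum_ite, Finset.sum_const, Finset.sum_const_zero, add_zero,
          nsmul_eq_mul, mul_comm]

lemma graph_snd {n : ℕ} {F : V n → V n} {p : V n × V n} (hp : p ∈ graphF F) : p.2 = F p.1 := by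
  simp only [graphF, Finset.mem_image, Finset.mem_univ, true_and] at hp
  obtain ⟨x, hx⟩ := hp
  rw [← hx]

lemma excMult_eq_SU {n : ℕ} (F : V n → V n) (a b : V n) :
    excMult (graphF F) (a, b) =
      (Finset.univ.filter fun U : Finset (V n) =>
        U.card = 3 ∧ U.sum id = a ∧ U.sum F = b).card := by
  rw [excMult]
  refine Finset.card_nbij' (fun T => T.image Prod.fst)
    (fun U => U.image (fun x => (x, F x))) ?_ ?_ ?_ ?_
  · intro T hT
    simp only [Finset.mem_coe, Finset.mem_filter, Finset.mem_powersetCard] at hT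
    obtain ⟨⟨hsub, hcard⟩, hsum⟩ := hT
    have hinj : ∀ p ∈ T, ∀ q ∈ T, p.1 = q.1 → p = q := by
      intro p hp q hq h
      have := graph_snd (hsub hp)
      have := graph_snd (hsub hq)
      exact Prod.ext h (by simp_all)
    simp only [Finset.mem_coe, Finset.mem_filter, Finset.mem_univ, true_and]
    refine ⟨by rw [Finset.card_image_of_injOn hinj, hcard], ?_, ?_⟩
    · rw [Finset.sum_image hinj]
      have h := congrArg Prod.fst hsum
      rw [Prod.fst_sum] at h
      simpa using h
    · rw [Finset.sum_image hinj]
      have h2 : (∑ p ∈ T, F p.1) = ∑ p ∈ T, p.2 :=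
        Finset.sum_congr rfl fun p hp => (graph_snd (hsub hp)).symm
      have h := congrArg Prod.snd hsum
      rw [Prod.snd_sum] at h
      rw [h2]
      simpa using h
  · intro U hU
    simp only [Finset.mem_coe, Finset.mem_filter, Finset.mem_univ, true_and] at hU
    obtain ⟨hcard, hsa, hsb⟩ := hU
    have hinj : Function.Injective (fun x : V n => (x, F x)) := by
      intro x y h; exact congrArg Prod.fst h
    simp only [Finset.mem_coe, Finset.mem_filter, Finset.mem_powersetCard]
    refine ⟨⟨?_, by rw [Finset.card_image_of_injective _ hinj, hcard]⟩, ?_⟩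
    · exact (Finset.image_subset_image (Finset.subset_univ U))
    · rw [Finset.sum_image (fun x _ y _ h => hinj h)]
      refine Prod.ext ?_ ?_
      · rw [Prod.fst_sum]; simpa using hsa
      · rw [Prod.snd_sum]; simpa using hsb
  · intro T hT
    simp only [Finset.mem_coe, Finset.mem_filter, Finset.mem_powersetCard] at hT
    obtain ⟨⟨hsub, hcard⟩, hsum⟩ := hT
    show Finset.image (fun x => (x, F x)) (Finset.image Prod.fst T) = T
    rw [Finset.image_image]
    have : ∀ p ∈ T, ((fun x : V n => (x, F x)) ∘ Prod.fst) p = id p := by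
      intro p hp; exact Prod.ext rfl (graph_snd (hsub hp)).symm
    rw [Finset.image_congr this, Finset.image_id]
  · intro U hU
    show Finset.image Prod.fst (Finset.image (fun x => (x, F x)) U) = U
    rw [Finset.image_image]
    have : ∀ x ∈ U, (Prod.fst ∘ fun x : V n => (x, F x)) x = id x := fun x _ => rfl
    rw [Finset.image_congr this, Finset.image_id]

lemma distinct3 {n : ℕ} {F : V n → V n} {a b : V n} (hb : b ≠ F a) {x y z : V n}
    (h1 : x + y + z = a) (h2 : F x + F y + F z = b) : x ≠ y ∧ x ≠ z ∧ y ≠ z := by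
  refine ⟨?_, ?_, ?_⟩ <;> rintro rfl
  · rw [addself, zero_add] at h1
    rw [addself, zero_add, h1] at h2
    exact hb h2.symm
  · have e : x + y + x = y := by rw [show x + y + x = x + x + y from by ring, addself, zero_add]
    rw [e] at h1
    have e2 : F x + F y + F x = F y := by
      rw [show F x + F y + F x = F x + F x + F y from by ring, addself, zero_add]
    rw [e2, h1] at h2
    exact hb h2.symm
  · have e : x + y + y = x := by rw [add_assoc, addself, add_zero]
    rw [e] at h1
    have e2 : F x + F y + F y = F x := by rw [add_assoc, addself, add_zero]
    rw [e2, h1] at h2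
    exact hb h2.symm

set_option maxHeartbeats 1000000 in
lemma triples_card {n : ℕ} (F : V n → V n) (a b : V n) (hb : b ≠ F a) :
    (Finset.univ.filter fun t : V n × V n × V n =>
        t.1 + t.2.1 + t.2.2 = a ∧ F t.1 + F t.2.1 + F t.2.2 = b).card
      = 6 * (Finset.univ.filter fun U : Finset (V n) =>
        U.card = 3 ∧ U.sum id = a ∧ U.sum F = b).card := by
  have hmap : ∀ t ∈ (Finset.univ.filter fun t : V n × V n × V n =>
      t.1 + t.2.1 + t.2.2 = a ∧ F t.1 + F t.2.1 + F t.2.2 = b),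
      ({t.1, t.2.1, t.2.2} : Finset (V n)) ∈ (Finset.univ.filter fun U : Finset (V n) =>
        U.card = 3 ∧ U.sum id = a ∧ U.sum F = b) := by
    intro t ht
    simp only [Finset.mem_filter, Finset.mem_univ, true_and] at ht ⊢
    obtain ⟨h1, h2⟩ := ht
    obtain ⟨hxy, hxz, hyz⟩ := distinct3 hb h1 h2
    refine ⟨?_, ?_, ?_⟩
    · rw [Finset.card_insert_of_notMem (by simp [hxy, hxz]),
        Finset.card_insert_of_notMem (by simp [hyz]), Finset.card_singleton]
    · rw [Finset.sum_insert (by simp [hxy, hxz]), Finset.sum_pair hyz]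
      simpa [← add_assoc] using h1
    · rw [Finset.sum_insert (by simp [hxy, hxz]), Finset.sum_pair hyz]
      simpa [← add_assoc] using h2
  have fiber6 : ∀ U ∈ (Finset.univ.filter fun U : Finset (V n) =>
      U.card = 3 ∧ U.sum id = a ∧ U.sum F = b),
      ((Finset.univ.filter fun t : V n × V n × V n =>
        t.1 + t.2.1 + t.2.2 = a ∧ F t.1 + F t.2.1 + F t.2.2 = b).filter
          (fun t => ({t.1, t.2.1, t.2.2} : Finset (V n)) = U)).card = 6 := by
    intro U hU
    simp only [Finset.mem_filter, Finset.mem_univ, true_and] at hU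
    obtain ⟨hc3, hsa, hsb⟩ := hU
    obtain ⟨p, q, r, hpq, hpr, hqr, rfl⟩ := Finset.card_eq_three.mp hc3
    have hsum : p + q + r = a := by
      rw [Finset.sum_insert (by simp [hpq, hpr]), Finset.sum_pair hqr] at hsa
      rw [add_assoc]; exact hsa
    have hFsum : F p + F q + F r = b := by
      rw [Finset.sum_insert (by simp [hpq, hpr]), Finset.sum_pair hqr] at hsb
      rw [add_assoc]; exact hsb
    have hfe : ((Finset.univ.filter fun t : V n × V n × V n =>
        t.1 + t.2.1 + t.2.2 = a ∧ F t.1 + F t.2.1 + F t.2.2 = b).filter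
          (fun t => ({t.1, t.2.1, t.2.2} : Finset (V n)) = {p, q, r})) =
        ({(p,q,r),(p,r,q),(q,p,r),(q,r,p),(r,p,q),(r,q,p)} :
          Finset (V n × V n × V n)) := by
      ext ⟨x, y, z⟩
      simp only [Finset.mem_filter, Finset.mem_univ, true_and, Finset.mem_insert,
        Finset.mem_singleton, Prod.mk.injEq]
      constructor
      · rintro ⟨⟨h1, h2⟩, hset⟩
        obtain ⟨hxy, hxz, hyz⟩ := distinct3 hb h1 h2
        have hx : x = p ∨ x = q ∨ x = r := by
          have hm : x ∈ ({x, y, z} : Finset (V n)) := by simp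
          rw [hset] at hm; simpa using hm
        have hy : y = p ∨ y = q ∨ y = r := by
          have hm : y ∈ ({x, y, z} : Finset (V n)) := by simp
          rw [hset] at hm; simpa using hm
        have hz : z = p ∨ z = q ∨ z = r := by
          have hm : z ∈ ({x, y, z} : Finset (V n)) := by simp
          rw [hset] at hm; simpa using hm
        clear h1 h2 hset hsum hFsum hsa hsb hc3 hmap hb
        rcases hx with rfl | rfl | rfl <;> rcases hy with rfl | rfl | rfl <;>
          rcases hz with rfl | rfl | rfl <;> simp_all
      · rintro (⟨rfl, rfl, rfl⟩ | ⟨rfl, rfl, rfl⟩ | ⟨rfl, rfl, rfl⟩ |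
          ⟨rfl, rfl, rfl⟩ | ⟨rfl, rfl, rfl⟩ | ⟨rfl, rfl, rfl⟩) <;>
          exact ⟨⟨by linear_combination hsum, by linear_combination hFsum⟩,
            by ext w; simp only [Finset.mem_insert, Finset.mem_singleton]; try tauto⟩
    rw [hfe]
    have n1 : q ≠ p := Ne.symm hpq
    have n2 : r ≠ p := Ne.symm hpr
    have n3 : r ≠ q := Ne.symm hqr
    rw [Finset.card_insert_of_notMem (by simp [Prod.mk.injEq, hpq, hpr, hqr, n1, n2, n3]),
      Finset.card_insert_of_notMem (by simp [Prod.mk.injEq, hpq, hpr, hqr, n1, n2, n3]),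
      Finset.card_insert_of_notMem (by simp [Prod.mk.injEq, hpq, hpr, hqr, n1, n2, n3]),
      Finset.card_insert_of_notMem (by simp [Prod.mk.injEq, hpq, hpr, hqr, n1, n2, n3]),
      Finset.card_insert_of_notMem (by simp [Prod.mk.injEq, hpq, hpr, hqr, n1, n2, n3]),
      Finset.card_singleton]
  rw [Finset.card_eq_sum_card_fiberwise hmap, Finset.sum_congr rfl fiber6,
    Finset.sum_const, smul_eq_mul, mul_comm]

/-- For an APN function `F : 𝔽₂ⁿ → 𝔽₂ⁿ` and any `(a, b)` with `b ≠ F a`,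
`3 · 2^{2n+1} · d_{G_F}(a, b) = ∑_{(u,v)} (−1)^(v·b + u·a) W_F(u,v)³`. -/
theorem excMult_graph_eq_walsh_cube_sum (n : ℕ) (F : V n → V n) (hF : IsAPN F)
    (a b : V n) (hb : b ≠ F a) :
    3 * 2 ^ (2 * n + 1) * (excMult (graphF F) (a, b) : ℤ) =
      ∑ u : V n, ∑ v : V n, (-1 : ℤ) ^ (ip v b + ip u a).val * walsh F u v ^ 3 := by
  rw [rhs_eq F a b, excMult_eq_SU F a b, triples_card F a b hb]
  push_cast
  rw [pow_succ]
  ring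
end

section
/- Suppose n > 1 and F : 𝔽₂ⁿ → 𝔽₂ⁿ is an APN function. If for all (a, b), (c, d) ∈ 𝔽₂ⁿ × 𝔽₂ⁿ with b ≠ F(a) and d ≠ F(c) the inequality |∑_{(u,v) : u·(a+c) ≠ v·(b+d)} (−1)^{v·b + u·a} · W_F(u,v)³| ≤ 2^{3n−1} − 2^{2n} holds (the sum ranging over pairs (u, v) ∈ 𝔽₂ⁿ × 𝔽₂ⁿ with u·(a+c) ≠ v·(b+d)), then the graph G_F is a maximal Sidon set. -/
/-- `S` is a maximal Sidon set. -/
def IsSidon {G : Type*} [AddCommGroup G] (S : Set G) : Prop :=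
  ¬ ∃ a b c d : G, a ∈ S ∧ b ∈ S ∧ c ∈ S ∧ d ∈ S ∧
      a ≠ b ∧ a ≠ c ∧ a ≠ d ∧ b ≠ c ∧ b ≠ d ∧ c ≠ d ∧ a + b = c + d

def IsMaximalSidon {G : Type*} [AddCommGroup G] (S : Set G) : Prop :=
  IsSidon S ∧ ∀ T : Set G, IsSidon T → S ⊆ T → T = S

/-! ### Auxiliary lemmas -/

lemma neg_one_pow_add' (s t : ZMod 2) : ((-1:ℤ))^(s+t).val = (-1)^s.val * (-1)^t.val := by
  revert s t; decide

lemma addV_self {n : ℕ} (x : V n) : x + x = 0 := by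
  have h : ∀ t : ZMod 2, t + t = 0 := by decide
  ext i; exact h (x i)

lemma addV_eq_zero_iff {n : ℕ} {x y : V n} : x + y = 0 ↔ x = y := by
  constructor
  · intro h
    have := congrArg (· + y) h
    simpa [add_assoc, addV_self] using this
  · rintro rfl; exact addV_self x

lemma cancel3V {n : ℕ} (x y z : V n) : x + y + z + x = y + z := by
  rw [add_comm (x + y + z) x, ← add_assoc, ← add_assoc, addV_self, zero_add]

lemma ip_add_right {n : ℕ} (u x y : V n) : ip u (x + y) = ip u x + ip u y := by
  simp [ip, mul_add, Finset.sum_add_distrib]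

lemma pow_val_sum' {ι : Type*} (s : Finset ι) (f : ι → ZMod 2) :
    ((-1:ℤ))^((∑ i ∈ s, f i).val) = ∏ i ∈ s, (-1:ℤ)^((f i).val) := by
  induction s using Finset.cons_induction with
  | empty => simp
  | cons a s ha ih => rw [Finset.sum_cons, Finset.prod_cons, neg_one_pow_add', ih]

lemma sum_sign' {n : ℕ} (x : V n) :
    ∑ u : V n, ((-1:ℤ))^(ip u x).val = if x = 0 then 2^n else 0 := by
  have h1 : ∀ u : V n, ((-1:ℤ))^(ip u x).val = ∏ i, (-1:ℤ)^((u i * x i).val) := by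
    intro u; exact pow_val_sum' _ _
  simp only [h1]
  rw [← Fintype.piFinset_univ,
    ← Finset.prod_univ_sum (t := fun _ => Finset.univ)
      (f := fun i t => (-1:ℤ)^((t * x i).val))]
  have h2 : ∀ c : ZMod 2, ∑ t : ZMod 2, ((-1:ℤ))^((t * c).val) = if c = 0 then 2 else 0 := by
    decide
  simp only [h2]
  by_cases hx : x = 0
  · simp [hx]
  · rw [if_neg hx]
    obtain ⟨i, hi⟩ : ∃ i, x i ≠ 0 := by
      by_contra h; push_neg at h; exact hx (funext h)
    exact Finset.prod_eq_zero (Finset.mem_univ i) (by simp [hi])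

lemma prod_sum_split' {α β : Type*} [Fintype α] [Fintype β] (f : α → ℤ) (g : β → ℤ) :
    ∑ p : α × β, g p.2 * f p.1 = (∑ b, g b) * ∑ a, f a := by
  rw [Fintype.sum_prod_type_right, Finset.sum_mul_sum]

/-- The set of triples `(x, y, z)` with `x + y + z = a` and `F x + F y + F z = b`. -/
def Tset {n : ℕ} (F : V n → V n) (a b : V n) : Finset (V n × V n × V n) :=
  Finset.univ.filter fun t => t.1 + t.2.1 + t.2.2 = a ∧ F t.1 + F t.2.1 + F t.2.2 = b

lemma cube_identity {n : ℕ} (F : V n → V n) (a b : V n) :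
    ∑ uv : V n × V n, (-1:ℤ)^((ip uv.2 b + ip uv.1 a).val) * walsh F uv.1 uv.2 ^ 3
      = 2^(2*n) * ((Tset F a b).card : ℤ) := by
  have cube : ∀ u v : V n, walsh F u v ^ 3
      = ∑ t : V n × V n × V n, (-1:ℤ)^((ip v (F t.1) + ip u t.1).val)
          * (-1:ℤ)^((ip v (F t.2.1) + ip u t.2.1).val)
          * (-1:ℤ)^((ip v (F t.2.2) + ip u t.2.2).val) := by
    intro u v
    rw [show walsh F u v ^ 3 = walsh F u v * walsh F u v * walsh F u v by ring]
    simp only [walsh, Finset.sum_mul_sum, Fintype.sum_prod_type, Finset.sum_mul, Finset.mul_sum]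
    exact Finset.sum_congr rfl fun x _ => Finset.sum_congr rfl fun y _ =>
      Finset.sum_congr rfl fun z _ => by ring
  have key : ∀ (t : V n × V n × V n) (uv : V n × V n),
      (-1:ℤ)^((ip uv.2 b + ip uv.1 a).val)
        * ((-1:ℤ)^((ip uv.2 (F t.1) + ip uv.1 t.1).val)
          * (-1:ℤ)^((ip uv.2 (F t.2.1) + ip uv.1 t.2.1).val)
          * (-1:ℤ)^((ip uv.2 (F t.2.2) + ip uv.1 t.2.2).val))
      = (-1:ℤ)^((ip uv.2 (F t.1 + F t.2.1 + F t.2.2 + b)).val)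
          * (-1:ℤ)^((ip uv.1 (t.1 + t.2.1 + t.2.2 + a)).val) := by
    intro t uv
    obtain ⟨u, v⟩ := uv
    obtain ⟨x, y, z⟩ := t
    simp only [ip_add_right, neg_one_pow_add']
    ring
  calc ∑ uv : V n × V n, (-1:ℤ)^((ip uv.2 b + ip uv.1 a).val) * walsh F uv.1 uv.2 ^ 3
      = ∑ uv : V n × V n, ∑ t : V n × V n × V n,
          (-1:ℤ)^((ip uv.2 (F t.1 + F t.2.1 + F t.2.2 + b)).val)
            * (-1:ℤ)^((ip uv.1 (t.1 + t.2.1 + t.2.2 + a)).val) := by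
        refine Finset.sum_congr rfl fun uv _ => ?_
        rw [cube uv.1 uv.2, Finset.mul_sum]
        exact Finset.sum_congr rfl fun t _ => key t uv
    _ = ∑ t : V n × V n × V n, ∑ uv : V n × V n,
          (-1:ℤ)^((ip uv.2 (F t.1 + F t.2.1 + F t.2.2 + b)).val)
            * (-1:ℤ)^((ip uv.1 (t.1 + t.2.1 + t.2.2 + a)).val) := Finset.sum_comm
    _ = ∑ t : V n × V n × V n,
          (if F t.1 + F t.2.1 + F t.2.2 + b = 0 then (2:ℤ)^n else 0)
            * (if t.1 + t.2.1 + t.2.2 + a = 0 then (2:ℤ)^n else 0) := by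
        refine Finset.sum_congr rfl fun t _ => ?_
        rw [prod_sum_split' (fun u => (-1:ℤ)^((ip u (t.1 + t.2.1 + t.2.2 + a)).val))
          (fun v => (-1:ℤ)^((ip v (F t.1 + F t.2.1 + F t.2.2 + b)).val))]
        rw [sum_sign', sum_sign']
    _ = 2^(2*n) * ((Tset F a b).card : ℤ) := by
        have : ∀ t : V n × V n × V n,
            (if F t.1 + F t.2.1 + F t.2.2 + b = 0 then (2:ℤ)^n else 0)
              * (if t.1 + t.2.1 + t.2.2 + a = 0 then (2:ℤ)^n else 0)
            = if t ∈ Tset F a b then (2:ℤ)^(2*n) else 0 := by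
          intro t
          simp only [Tset, Finset.mem_filter, Finset.mem_univ, true_and, addV_eq_zero_iff]
          split_ifs <;> simp_all [two_mul, pow_add]
        simp only [this]
        rw [Finset.sum_ite_mem, Finset.univ_inter, Finset.sum_const, nsmul_eq_mul]
        ring

lemma apn_no_triple {n : ℕ} {F : V n → V n} (hF : IsAPN F) {x y z : V n}
    (hxy : x ≠ y) (hxz : x ≠ z) (hyz : y ≠ z) :
    F x + F y + F z ≠ F (x + y + z) := by
  intro h
  have ha : x + y ≠ 0 := fun h0 => hxy (addV_eq_zero_iff.mp h0)
  set S := Finset.univ.filter (fun w => F (w + (x + y)) + F w = F x + F y) with hS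
  have hx : x ∈ S := by
    simp only [hS, Finset.mem_filter, Finset.mem_univ, true_and]
    rw [show x + (x + y) = y by rw [← add_assoc, addV_self, zero_add], add_comm]
  have hy : y ∈ S := by
    simp only [hS, Finset.mem_filter, Finset.mem_univ, true_and]
    rw [show y + (x + y) = x by rw [add_comm x y, ← add_assoc, addV_self, zero_add]]
  have hz : z ∈ S := by
    simp only [hS, Finset.mem_filter, Finset.mem_univ, true_and]
    rw [show z + (x + y) = x + y + z from add_comm _ _, ← h, add_assoc, addV_self, add_zero]
  have hsub : ({x, y, z} : Finset (V n)) ⊆ S := by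
    intro w hw
    simp only [Finset.mem_insert, Finset.mem_singleton] at hw
    rcases hw with rfl | rfl | rfl <;> assumption
  have h3 : ({x, y, z} : Finset (V n)).card = 3 :=
    Finset.card_eq_three.mpr ⟨x, y, z, hxy, hxz, hyz, rfl⟩
  have h1 : 3 ≤ S.card := h3 ▸ Finset.card_le_card hsub
  have h2 : S.card ≤ 2 := by rw [hS]; exact hF (x + y) (F x + F y) ha
  omega

lemma triple_distinct {n : ℕ} {F : V n → V n} {a b : V n} (hab : b ≠ F a)
    {t : V n × V n × V n} (ht : t ∈ Tset F a b) :
    t.1 ≠ t.2.1 ∧ t.1 ≠ t.2.2 ∧ t.2.1 ≠ t.2.2 := by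
  obtain ⟨x, y, z⟩ := t
  simp only [Tset, Finset.mem_filter, Finset.mem_univ, true_and] at ht
  obtain ⟨hsum, hFsum⟩ := ht
  dsimp only
  refine ⟨?_, ?_, ?_⟩ <;> rintro rfl
  · rw [addV_self, zero_add] at hsum hFsum
    subst hsum; exact hab hFsum.symm
  · rw [add_comm x y, add_assoc, addV_self, add_zero] at hsum
    rw [add_comm (F x) (F y), add_assoc, addV_self, add_zero] at hFsum
    subst hsum; exact hab hFsum.symm
  · rw [add_assoc, addV_self, add_zero] at hsum hFsum
    subst hsum; exact hab hFsum.symm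

lemma card_distinct' {α : Type*} [Fintype α] [DecidableEq α] :
    (Finset.univ.filter fun t : α × α × α => t.1 ≠ t.2.1 ∧ t.1 ≠ t.2.2 ∧ t.2.1 ≠ t.2.2).card
      = Fintype.card α * (Fintype.card α - 1) * (Fintype.card α - 2) := by
  classical
  rw [Finset.card_filter]
  rw [Fintype.sum_prod_type, Finset.sum_congr rfl (fun x _ => Fintype.sum_prod_type _)]
  have hz : ∀ x y : α, x ≠ y →
      (∑ z : α, if x ≠ y ∧ x ≠ z ∧ y ≠ z then (1:ℕ) else 0) = Fintype.card α - 2 := by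
    intro x y hxy
    rw [← Finset.card_filter]
    have : (Finset.univ.filter fun z => x ≠ y ∧ x ≠ z ∧ y ≠ z)
        = Finset.univ \ {x, y} := by
      ext z
      simp only [Finset.mem_filter, Finset.mem_univ, true_and, Finset.mem_sdiff,
        Finset.mem_insert, Finset.mem_singleton]
      constructor
      · rintro ⟨-, h2, h3⟩ h
        rcases h with rfl | rfl
        exacts [h2 rfl, h3 rfl]
      · intro h
        push_neg at h
        exact ⟨hxy, fun e => h.1 e.symm, fun e => h.2 e.symm⟩
    rw [this, Finset.card_sdiff_of_subset (Finset.subset_univ _), Finset.card_univ]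
    rw [Finset.card_insert_of_notMem (by simp [hxy]), Finset.card_singleton]
  have hy : ∀ x : α,
      (∑ y : α, ∑ z : α, if x ≠ y ∧ x ≠ z ∧ y ≠ z then (1:ℕ) else 0)
        = (Fintype.card α - 1) * (Fintype.card α - 2) := by
    intro x
    have step : ∀ y : α,
        (∑ z : α, if x ≠ y ∧ x ≠ z ∧ y ≠ z then (1:ℕ) else 0)
          = if x ≠ y then Fintype.card α - 2 else 0 := by
      intro y
      by_cases hxy : x = y
      · simp [hxy]
      · rw [if_pos hxy, hz x y hxy]
    rw [Finset.sum_congr rfl fun y _ => step y, ← Finset.sum_filter]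
    rw [Finset.sum_const]
    have : (Finset.univ.filter fun y => x ≠ y) = Finset.univ.erase x := by
      ext y
      simp [Finset.mem_erase, ne_comm]
    rw [this, Finset.card_erase_of_mem (Finset.mem_univ x), Finset.card_univ, smul_eq_mul]
  rw [Finset.sum_congr rfl fun x _ => hy x, Finset.sum_const, Finset.card_univ, smul_eq_mul,
    mul_assoc]

lemma sign_eq_of {n : ℕ} (u v a b c d : V n) (h : ip u (a+c) = ip v (b+d)) :
    ip v b + ip u a = ip v d + ip u c := by
  have hdec : ∀ α β γ δ : ZMod 2, α + γ = β + δ → β + α = δ + γ := by decide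
  have h' : ip u a + ip u c = ip v b + ip v d := by
    rw [← ip_add_right, ← ip_add_right]; exact h
  exact hdec _ _ _ _ h'

lemma card_diff_bound {n : ℕ} (hn : 1 < n) (F : V n → V n)
    (hbound : ∀ a b c d : V n, b ≠ F a → d ≠ F c →
      |∑ uv ∈ Finset.univ.filter
          (fun uv : V n × V n => ip uv.1 (a + c) ≠ ip uv.2 (b + d)),
          (-1 : ℤ) ^ (ip uv.2 b + ip uv.1 a).val * walsh F uv.1 uv.2 ^ 3|
        ≤ 2 ^ (3 * n - 1) - 2 ^ (2 * n))
    {a b c d : V n} (hab : b ≠ F a) (hcd : d ≠ F c) :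
    |((Tset F a b).card : ℤ) - ((Tset F c d).card : ℤ)| ≤ 2^n - 2 := by
  classical
  set Sb := ∑ uv ∈ Finset.univ.filter
      (fun uv : V n × V n => ip uv.1 (a + c) ≠ ip uv.2 (b + d)),
      (-1:ℤ)^((ip uv.2 b + ip uv.1 a).val) * walsh F uv.1 uv.2 ^ 3 with hSb
  set Sd := ∑ uv ∈ Finset.univ.filter
      (fun uv : V n × V n => ip uv.1 (a + c) ≠ ip uv.2 (b + d)),
      (-1:ℤ)^((ip uv.2 d + ip uv.1 c).val) * walsh F uv.1 uv.2 ^ 3 with hSd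
  have split_ab : (2:ℤ)^(2*n) * ((Tset F a b).card : ℤ)
      = Sb + ∑ uv ∈ Finset.univ.filter
            (fun uv : V n × V n => ¬ (ip uv.1 (a + c) ≠ ip uv.2 (b + d))),
            (-1:ℤ)^((ip uv.2 b + ip uv.1 a).val) * walsh F uv.1 uv.2 ^ 3 := by
    rw [hSb, ← cube_identity, Finset.sum_filter_add_sum_filter_not]
  have split_cd : (2:ℤ)^(2*n) * ((Tset F c d).card : ℤ)
      = Sd + ∑ uv ∈ Finset.univ.filter
            (fun uv : V n × V n => ¬ (ip uv.1 (a + c) ≠ ip uv.2 (b + d))),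
            (-1:ℤ)^((ip uv.2 d + ip uv.1 c).val) * walsh F uv.1 uv.2 ^ 3 := by
    rw [hSd, ← cube_identity, Finset.sum_filter_add_sum_filter_not]
  have heq : (∑ uv ∈ Finset.univ.filter
            (fun uv : V n × V n => ¬ (ip uv.1 (a + c) ≠ ip uv.2 (b + d))),
            (-1:ℤ)^((ip uv.2 b + ip uv.1 a).val) * walsh F uv.1 uv.2 ^ 3)
      = ∑ uv ∈ Finset.univ.filter
            (fun uv : V n × V n => ¬ (ip uv.1 (a + c) ≠ ip uv.2 (b + d))),
            (-1:ℤ)^((ip uv.2 d + ip uv.1 c).val) * walsh F uv.1 uv.2 ^ 3 := by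
    refine Finset.sum_congr rfl fun uv huv => ?_
    rw [sign_eq_of uv.1 uv.2 a b c d (not_not.mp (Finset.mem_filter.mp huv).2)]
  have hb1 := hbound a b c d hab hcd
  have hb2 := hbound c d a b hcd hab
  rw [add_comm c a, add_comm d b] at hb2
  rw [← hSb] at hb1
  rw [← hSd] at hb2
  have key : (2:ℤ)^(2*n) * (((Tset F a b).card : ℤ) - ((Tset F c d).card : ℤ))
      = Sb - Sd := by
    linear_combination split_ab - split_cd + heq
  have e1 : (2:ℤ)^(3*n) = 2^(2*n) * 2^n := by rw [← pow_add]; congr 1; omega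
  have e2 : (2:ℤ)*2^(3*n-1) = 2^(3*n) := by rw [← pow_succ']; congr 1; omega
  have hR : (2:ℤ)^(3*n-1) - 2^(2*n) + (2^(3*n-1) - 2^(2*n)) = 2^(2*n)*(2^n - 2) := by
    linear_combination e2 + e1
  have h3 : |(2:ℤ)^(2*n) * (((Tset F a b).card:ℤ) - ((Tset F c d).card:ℤ))|
      ≤ 2^(2*n)*(2^n-2) := by
    rw [key]
    exact le_trans (abs_sub _ _) (le_trans (add_le_add hb1 hb2) (le_of_eq hR))
  rw [abs_mul, abs_of_nonneg (by positivity : (0:ℤ) ≤ 2^(2*n))] at h3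
  exact le_of_mul_le_mul_left h3 (by positivity)

lemma total_count {n : ℕ} {F : V n → V n} (hF : IsAPN F) :
    ∑ p ∈ Finset.univ.filter (fun p : V n × V n => p.2 ≠ F p.1), (Tset F p.1 p.2).card
      = 2^n * (2^n - 1) * (2^n - 2) := by
  classical
  set D := Finset.univ.filter
    (fun t : V n × V n × V n => t.1 ≠ t.2.1 ∧ t.1 ≠ t.2.2 ∧ t.2.1 ≠ t.2.2) with hD
  have hcard : D.card = 2^n * (2^n - 1) * (2^n - 2) := by
    rw [hD, card_distinct']
    have : Fintype.card (V n) = 2^n := by simp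
    rw [this]
  have fib : D.card = ∑ p : V n × V n,
      (D.filter fun t => (t.1 + t.2.1 + t.2.2, F t.1 + F t.2.1 + F t.2.2) = p).card :=
    Finset.card_eq_sum_card_fiberwise (fun _ _ => Finset.mem_univ _)
  have fiber_eq : ∀ p : V n × V n, p.2 ≠ F p.1 →
      (D.filter fun t => (t.1 + t.2.1 + t.2.2, F t.1 + F t.2.1 + F t.2.2) = p)
        = Tset F p.1 p.2 := by
    intro p hp
    ext t
    simp only [hD, Tset, Finset.mem_filter, Finset.mem_univ, true_and, Prod.mk.injEq,
      Prod.ext_iff]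
    constructor
    · rintro ⟨-, h1, h2⟩; exact ⟨h1, h2⟩
    · intro h
      refine ⟨?_, h.1, h.2⟩
      exact triple_distinct hp (by simp [Tset, Finset.mem_filter, h.1, h.2])
  have fiber_zero : ∀ p : V n × V n, p.2 = F p.1 →
      (D.filter fun t => (t.1 + t.2.1 + t.2.2, F t.1 + F t.2.1 + F t.2.2) = p) = ∅ := by
    intro p hp
    refine Finset.eq_empty_of_forall_notMem fun t ht => ?_
    obtain ⟨htD, hφ⟩ := Finset.mem_filter.mp ht
    obtain ⟨-, h1, h2, h3⟩ := Finset.mem_filter.mp htD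
    have hs : t.1 + t.2.1 + t.2.2 = p.1 := congrArg Prod.fst hφ
    have hFs : F t.1 + F t.2.1 + F t.2.2 = p.2 := congrArg Prod.snd hφ
    exact apn_no_triple hF h1 h2 h3 (by rw [hs, hFs, hp])
  have hsplit := Finset.sum_filter_add_sum_filter_not Finset.univ
    (fun p : V n × V n => p.2 ≠ F p.1)
    (fun p => (D.filter fun t =>
      (t.1 + t.2.1 + t.2.2, F t.1 + F t.2.1 + F t.2.2) = p).card)
  have hzero : ∑ p ∈ Finset.univ.filter (fun p : V n × V n => ¬ p.2 ≠ F p.1),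
      (D.filter fun t => (t.1 + t.2.1 + t.2.2, F t.1 + F t.2.1 + F t.2.2) = p).card = 0 := by
    refine Finset.sum_eq_zero fun p hp => ?_
    rw [fiber_zero p (not_not.mp (Finset.mem_filter.mp hp).2)]
    rfl
  have hmain : ∑ p ∈ Finset.univ.filter (fun p : V n × V n => p.2 ≠ F p.1),
      (Tset F p.1 p.2).card
      = ∑ p ∈ Finset.univ.filter (fun p : V n × V n => p.2 ≠ F p.1),
      (D.filter fun t => (t.1 + t.2.1 + t.2.2, F t.1 + F t.2.1 + F t.2.2) = p).card := by
    refine Finset.sum_congr rfl fun p hp => ?_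
    rw [fiber_eq p (Finset.mem_filter.mp hp).2]
  rw [hmain]
  omega

theorem walsh_bound_implies_graph_maximal (n : ℕ) (hn : 1 < n) (F : V n → V n)
    (hF : IsAPN F)
    (hbound : ∀ a b c d : V n, b ≠ F a → d ≠ F c →
      |∑ uv ∈ Finset.univ.filter
          (fun uv : V n × V n => ip uv.1 (a + c) ≠ ip uv.2 (b + d)),
          (-1 : ℤ) ^ (ip uv.2 b + ip uv.1 a).val * walsh F uv.1 uv.2 ^ 3|
        ≤ 2 ^ (3 * n - 1) - 2 ^ (2 * n)) :
    IsMaximalSidon (graphF F : Set (V n × V n)) := by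
  classical
  have hm4 : (4:ℕ) ≤ 2^n := by
    calc (4:ℕ) = 2^2 := rfl
    _ ≤ 2^n := Nat.pow_le_pow_right (by norm_num) hn
  -- every point off the graph admits a triple
  have key : ∀ a b : V n, b ≠ F a → (Tset F a b).Nonempty := by
    by_contra hcon
    push_neg at hcon
    obtain ⟨a₀, b₀, hab₀, hempty⟩ := hcon
    have hcard0 : (Tset F a₀ b₀).card = 0 :=
      Finset.card_eq_zero.mpr hempty
    set O := Finset.univ.filter (fun p : V n × V n => p.2 ≠ F p.1) with hO
    -- cardinality of O
    have hgraph_eq : (Finset.univ.filter (fun p : V n × V n => p.2 = F p.1))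
        = Finset.univ.image (fun x : V n => (x, F x)) := by
      ext ⟨p1, p2⟩
      simp only [Finset.mem_filter, Finset.mem_univ, true_and, Finset.mem_image, Prod.mk.injEq]
      constructor
      · rintro rfl; exact ⟨p1, rfl, rfl⟩
      · rintro ⟨x, rfl, rfl⟩; rfl
    have hgraph_card : (Finset.univ.filter (fun p : V n × V n => p.2 = F p.1)).card = 2^n := by
      rw [hgraph_eq, Finset.card_image_of_injective _
        (fun x y h => congrArg Prod.fst h)]
      simp
    have hOcard : O.card = 2^n * 2^n - 2^n := by
      rw [hO]
      show (Finset.univ.filter (fun p : V n × V n => ¬ p.2 = F p.1)).card = _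
      rw [Finset.filter_not, Finset.card_sdiff_of_subset (Finset.filter_subset _ _), hgraph_card,
        Finset.card_univ]
      congr 1
      simp [Fintype.card_prod]
    have h1n : (1:ℕ) ≤ 2^n := Nat.one_le_two_pow
    have h2n : (2:ℕ) ≤ 2^n := by omega
    have hOcardZ : (O.card : ℤ) = 2^n * (2^n - 1) := by
      rw [hOcard]
      have : (2:ℕ)^n ≤ 2^n * 2^n := Nat.le_mul_of_pos_left _ (by omega)
      push_cast [Nat.cast_sub this]
      ring
    have hsumZ : (∑ p ∈ O, ((Tset F p.1 p.2).card : ℤ))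
        = (2:ℤ)^n * (2^n - 1) * (2^n - 2) := by
      rw [← Nat.cast_sum]
      rw [hO]
      rw [total_count hF]
      push_cast [Nat.cast_sub h1n, Nat.cast_sub h2n]
      ring
    have hbnd : ∀ p ∈ O, ((Tset F p.1 p.2).card : ℤ) ≤ (2:ℤ)^n - 2 := by
      intro p hp
      have hp2 : p.2 ≠ F p.1 := (Finset.mem_filter.mp hp).2
      have hB := card_diff_bound hn F hbound hp2 hab₀
      rw [hcard0] at hB
      rw [Nat.cast_zero, sub_zero, abs_of_nonneg (Nat.cast_nonneg _)] at hB
      exact hB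
    have hmem : (a₀, b₀) ∈ O := Finset.mem_filter.mpr ⟨Finset.mem_univ _, hab₀⟩
    have hstrict : ((Tset F (a₀, b₀).1 (a₀, b₀).2).card : ℤ) < (2:ℤ)^n - 2 := by
      have : ((2:ℕ):ℤ) ^ n = ((2^n : ℕ) : ℤ) := by push_cast; ring
      rw [show (Tset F (a₀, b₀).1 (a₀, b₀).2).card = 0 from hcard0]
      have : (4:ℤ) ≤ 2^n := by exact_mod_cast hm4
      push_cast
      linarith
    have hlt : (∑ p ∈ O, ((Tset F p.1 p.2).card : ℤ)) < ∑ _p ∈ O, ((2:ℤ)^n - 2) :=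
      Finset.sum_lt_sum hbnd ⟨(a₀, b₀), hmem, hstrict⟩
    rw [Finset.sum_const, nsmul_eq_mul, hOcardZ, hsumZ] at hlt
    have : (2:ℤ)^n * (2^n - 1) * (2^n - 2) = 2^n * (2^n - 1) * (2^n - 2) := rfl
    linarith [hlt]
  -- membership helper for the graph
  have hmemgraph : ∀ x : V n, ((x, F x) : V n × V n) ∈ (graphF F : Set (V n × V n)) := by
    intro x
    exact Finset.mem_coe.mpr (Finset.mem_image_of_mem _ (Finset.mem_univ x))
  constructor
  · -- the graph is a Sidon set
    rintro ⟨p, q, r, s, hp, hq, hr, hs, hpq, hpr, hps, hqr, hqs, hrs, hsum⟩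
    rw [Finset.mem_coe] at hp hq hr hs
    simp only [graphF, Finset.mem_image, Finset.mem_univ, true_and] at hp hq hr hs
    obtain ⟨x, rfl⟩ := hp
    obtain ⟨y, rfl⟩ := hq
    obtain ⟨z, rfl⟩ := hr
    obtain ⟨w, rfl⟩ := hs
    have hxy : x ≠ y := fun h => hpq (by rw [h])
    have hxz : x ≠ z := fun h => hpr (by rw [h])
    have hyz : y ≠ z := fun h => hqr (by rw [h])
    have h1 : x + y = z + w := congrArg Prod.fst hsum
    have h2 : F x + F y = F z + F w := congrArg Prod.snd hsum
    have hw : x + y + z = w := by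
      rw [h1, add_comm z w, add_assoc, addV_self, add_zero]
    have hFw : F x + F y + F z = F w := by
      rw [h2, add_comm (F z) (F w), add_assoc, addV_self, add_zero]
    exact apn_no_triple hF hxy hxz hyz (by rw [hw]; exact hFw)
  · -- maximality
    intro T hT hsub
    refine Set.Subset.antisymm ?_ hsub
    intro p hpT
    by_contra hpg
    have hp2 : p.2 ≠ F p.1 := by
      intro h
      exact hpg (by
        have hpe : p = (p.1, F p.1) := Prod.ext rfl h
        rw [hpe]; exact hmemgraph p.1)
    obtain ⟨t, ht⟩ := key p.1 p.2 hp2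
    have hdist := triple_distinct hp2 ht
    obtain ⟨x, y, z⟩ := t
    obtain ⟨hxy, hxz, hyz⟩ := hdist
    simp only [Tset, Finset.mem_filter, Finset.mem_univ, true_and] at ht
    obtain ⟨hsum', hFsum'⟩ := ht
    dsimp only at hxy hxz hyz hsum' hFsum'
    apply hT
    refine ⟨p, (x, F x), (y, F y), (z, F z), hpT,
      hsub (hmemgraph x), hsub (hmemgraph y), hsub (hmemgraph z),
      ?_, ?_, ?_, ?_, ?_, ?_, ?_⟩
    · exact fun h => hpg (h ▸ hmemgraph x)
    · exact fun h => hpg (h ▸ hmemgraph y)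
    · exact fun h => hpg (h ▸ hmemgraph z)
    · exact fun h => hxy (congrArg Prod.fst h)
    · exact fun h => hxz (congrArg Prod.fst h)
    · exact fun h => hyz (congrArg Prod.fst h)
    · have c1 : p.1 + x = y + z := by rw [← hsum']; exact cancel3V x y z
      have c2 : p.2 + F x = F y + F z := by rw [← hFsum']; exact cancel3V (F x) (F y) (F z)
      exact Prod.ext_iff.mpr ⟨c1, c2⟩
end

section
/- Let F : 𝔽₂ⁿ → 𝔽₂ⁿ be an APN function. If F is plateaued and every component function of F is unbalanced, then for all a, α, b ∈ 𝔽₂ⁿ with b ≠ F(a) one has d_{G_F}(a, b) = d_{G_F}(α, b + F(a) + F(α)); in particular, the exclude distribution of G_F is uniform on the partition {Q_a(F) : a ∈ 𝔽₂ⁿ} of (𝔽₂ⁿ × 𝔽₂ⁿ) ∖ G_F, where Q_a(F) = {a} × (𝔽₂ⁿ ∖ {F(a)}). -/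
namespace Aux

def chi (s : ZMod 2) : ℤ := (-1) ^ s.val

lemma chi_add : ∀ s t : ZMod 2, chi (s + t) = chi s * chi t := by decide

lemma chi_one : chi 1 = -1 := by decide

variable {n : ℕ}

lemma vadd_self (x : V n) : x + x = 0 := by
  funext i
  exact (by decide : ∀ a : ZMod 2, a + a = 0) _

lemma vadd_eq_zero_iff (x y : V n) : x + y = 0 ↔ x = y := by
  constructor
  · intro h
    have h2 := congrArg (fun z => z + y) h
    simpa [add_assoc, vadd_self] using h2
  · rintro rfl; exact vadd_self _

lemma ip_add_right (u x y : V n) : ip u (x + y) = ip u x + ip u y := by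
  simp [ip, mul_add, Finset.sum_add_distrib]

lemma ip_add_left (u w x : V n) : ip (u + w) x = ip u x + ip w x := by
  simp [ip, add_mul, Finset.sum_add_distrib]

lemma ip_single_left (i : Fin n) (x : V n) : ip (Pi.single i 1) x = x i := by
  simp [ip, Pi.single_apply, ite_mul]

lemma card_V : Fintype.card (V n) = 2 ^ n := by
  simp [ZMod.card]

lemma sum_chi (c : V n) : ∑ u : V n, chi (ip u c) = if c = 0 then (2:ℤ)^n else 0 := by
  by_cases hc : c = 0
  · subst hc
    simp [ip, chi, Finset.card_univ, card_V]
  · simp only [hc, if_false]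
    obtain ⟨i, hi⟩ : ∃ i, c i ≠ 0 := by
      by_contra h
      push_neg at h
      exact hc (funext fun i => h i)
    have hci : c i = 1 := by revert hi; generalize c i = a; revert a; decide
    have key : ∑ u : V n, chi (ip u c) = ∑ u : V n, chi (ip (u + Pi.single i 1) c) :=
      (Fintype.sum_equiv (Equiv.addRight (Pi.single i 1)) _ _ (fun u => rfl)).symm
    have : ∀ u : V n, chi (ip (u + Pi.single i 1) c) = - chi (ip u c) := by
      intro u
      rw [ip_add_left, chi_add, ip_single_left, hci, chi_one]
      ring
    have h2 : ∑ u : V n, chi (ip (u + Pi.single i 1) c) = - ∑ u : V n, chi (ip u c) := by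
      simp [this]
    rw [h2] at key
    linarith [key]


lemma walsh_eq (F : V n → V n) (u v : V n) :
    walsh F u v = ∑ x : V n, chi (ip v (F x)) * chi (ip u x) :=
  Finset.sum_congr rfl (fun x _ => chi_add _ _)

lemma inversion (F : V n → V n) (v a : V n) :
    ∑ u : V n, walsh F u v * chi (ip u a) = (2:ℤ)^n * chi (ip v (F a)) := by
  have step1 : ∀ u : V n, walsh F u v * chi (ip u a)
      = ∑ x : V n, chi (ip v (F x)) * chi (ip u (x + a)) := by
    intro u
    rw [walsh_eq, Finset.sum_mul]
    refine Finset.sum_congr rfl fun x _ => ?_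
    rw [ip_add_right, chi_add]
    ring
  calc ∑ u : V n, walsh F u v * chi (ip u a)
      = ∑ u : V n, ∑ x : V n, chi (ip v (F x)) * chi (ip u (x + a)) :=
        Finset.sum_congr rfl fun u _ => step1 u
    _ = ∑ x : V n, ∑ u : V n, chi (ip v (F x)) * chi (ip u (x + a)) := Finset.sum_comm
    _ = ∑ x : V n, chi (ip v (F x)) * ∑ u : V n, chi (ip u (x + a)) := by
        simp [Finset.mul_sum]
    _ = ∑ x : V n, chi (ip v (F x)) * (if x = a then (2:ℤ)^n else 0) := by
        refine Finset.sum_congr rfl fun x _ => ?_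
        rw [sum_chi]
        simp only [vadd_eq_zero_iff]
    _ = (2:ℤ)^n * chi (ip v (F a)) := by
        simp [mul_ite, Finset.sum_ite_eq']
        ring

lemma cube_sum {β : Type*} [Fintype β] (f : β → ℤ) :
    (∑ x : β, f x) ^ 3 = ∑ p : β × β × β, f p.1 * f p.2.1 * f p.2.2 := by
  rw [pow_succ, pow_two, Finset.sum_mul_sum, Finset.sum_mul]
  rw [Fintype.sum_prod_type]
  refine Finset.sum_congr rfl fun x _ => ?_
  rw [Fintype.sum_prod_type, Finset.sum_mul]
  refine Finset.sum_congr rfl fun y _ => ?_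
  rw [Finset.mul_sum]

lemma key (F : V n → V n)
    (hpl : ∀ v : V n, ∃ lam : ℤ, 0 ≤ lam ∧
      ∀ u : V n, walsh F u v = 0 ∨ walsh F u v = lam ∨ walsh F u v = -lam)
    (a b : V n) :
    ((2:ℤ)^n)^2 * ((Finset.univ.filter (fun p : V n × V n × V n =>
        p.1 + p.2.1 + p.2.2 = a ∧ F p.1 + F p.2.1 + F p.2.2 = b)).card : ℤ)
    = (2:ℤ)^n * ∑ v : V n,
        (Classical.choose (hpl v))^2 * chi (ip v (b + F a)) := by
  set lam : V n → ℤ := fun v => Classical.choose (hpl v) with hlam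
  set D : ℤ := ∑ v : V n, ∑ u : V n, (walsh F u v)^3 * (chi (ip u a) * chi (ip v b)) with hD
  have claim1 : D = ((2:ℤ)^n)^2 * ((Finset.univ.filter (fun p : V n × V n × V n =>
        p.1 + p.2.1 + p.2.2 = a ∧ F p.1 + F p.2.1 + F p.2.2 = b)).card : ℤ) := by
    have expand : ∀ v u : V n, (walsh F u v)^3 * (chi (ip u a) * chi (ip v b))
        = ∑ p : V n × V n × V n,
            chi (ip v (F p.1 + F p.2.1 + F p.2.2 + b)) * chi (ip u (p.1 + p.2.1 + p.2.2 + a)) := by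
      intro v u
      rw [walsh_eq, cube_sum, Finset.sum_mul]
      refine Finset.sum_congr rfl fun p _ => ?_
      simp only [ip_add_right, chi_add]
      ring
    calc D = ∑ v : V n, ∑ u : V n, ∑ p : V n × V n × V n,
            chi (ip v (F p.1 + F p.2.1 + F p.2.2 + b)) * chi (ip u (p.1 + p.2.1 + p.2.2 + a)) := by
          rw [hD]
          exact Finset.sum_congr rfl fun v _ => Finset.sum_congr rfl fun u _ => expand v u
      _ = ∑ v : V n, ∑ p : V n × V n × V n,
            chi (ip v (F p.1 + F p.2.1 + F p.2.2 + b)) * ∑ u : V n, chi (ip u (p.1 + p.2.1 + p.2.2 + a)) := by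
          refine Finset.sum_congr rfl fun v _ => ?_
          rw [Finset.sum_comm]
          exact Finset.sum_congr rfl fun p _ => (Finset.mul_sum _ _ _).symm
      _ = ∑ p : V n × V n × V n,
            (∑ v : V n, chi (ip v (F p.1 + F p.2.1 + F p.2.2 + b))) *
              (∑ u : V n, chi (ip u (p.1 + p.2.1 + p.2.2 + a))) := by
          rw [Finset.sum_comm]
          exact Finset.sum_congr rfl fun p _ => (Finset.sum_mul _ _ _).symm
      _ = ∑ p : V n × V n × V n,
            (if F p.1 + F p.2.1 + F p.2.2 = b then (2:ℤ)^n else 0) *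
              (if p.1 + p.2.1 + p.2.2 = a then (2:ℤ)^n else 0) := by
          refine Finset.sum_congr rfl fun p _ => ?_
          rw [sum_chi, sum_chi]
          simp only [vadd_eq_zero_iff]
      _ = ∑ p : V n × V n × V n,
            (if p.1 + p.2.1 + p.2.2 = a ∧ F p.1 + F p.2.1 + F p.2.2 = b then ((2:ℤ)^n)^2 else 0) := by
          refine Finset.sum_congr rfl fun p _ => ?_
          by_cases h1 : p.1 + p.2.1 + p.2.2 = a <;> by_cases h2 : F p.1 + F p.2.1 + F p.2.2 = b <;>
            simp [h1, h2] <;> ring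
      _ = ((2:ℤ)^n)^2 * ((Finset.univ.filter (fun p : V n × V n × V n =>
            p.1 + p.2.1 + p.2.2 = a ∧ F p.1 + F p.2.1 + F p.2.2 = b)).card : ℤ) := by
          rw [Finset.sum_ite, Finset.sum_const, Finset.sum_const]
          simp [mul_comm]
  have claim2 : D = (2:ℤ)^n * ∑ v : V n, (lam v)^2 * chi (ip v (b + F a)) := by
    rw [hD, Finset.mul_sum]
    refine Finset.sum_congr rfl fun v _ => ?_
    have hcube : ∀ u : V n, (walsh F u v)^3 = (lam v)^2 * walsh F u v := by
      intro u
      rcases (Classical.choose_spec (hpl v)).2 u with h | h | h <;> rw [h] <;> ring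
    calc ∑ u : V n, (walsh F u v)^3 * (chi (ip u a) * chi (ip v b))
        = (lam v)^2 * chi (ip v b) * ∑ u : V n, walsh F u v * chi (ip u a) := by
          rw [Finset.mul_sum]
          refine Finset.sum_congr rfl fun u _ => ?_
          rw [hcube]
          ring
      _ = (lam v)^2 * chi (ip v b) * ((2:ℤ)^n * chi (ip v (F a))) := by rw [inversion]
      _ = (2:ℤ)^n * ((lam v)^2 * chi (ip v (b + F a))) := by
          rw [ip_add_right, chi_add]
          ring
  rw [← claim1, claim2]


lemma count_eq (F : V n → V n)
    (hpl : ∀ v : V n, ∃ lam : ℤ, 0 ≤ lam ∧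
      ∀ u : V n, walsh F u v = 0 ∨ walsh F u v = lam ∨ walsh F u v = -lam)
    (a b x2 y2 : V n) (h : b + F a = y2 + F x2) :
    (Finset.univ.filter (fun p : V n × V n × V n =>
        p.1 + p.2.1 + p.2.2 = a ∧ F p.1 + F p.2.1 + F p.2.2 = b)).card
    = (Finset.univ.filter (fun p : V n × V n × V n =>
        p.1 + p.2.1 + p.2.2 = x2 ∧ F p.1 + F p.2.1 + F p.2.2 = y2)).card := by
  have k1 := key F hpl a b
  have k2 := key F hpl x2 y2
  rw [h] at k1
  have h3 := k1.trans k2.symm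
  have h4 : (((2:ℤ)^n)^2 : ℤ) ≠ 0 := by positivity
  exact_mod_cast mul_left_cancel₀ h4 h3


lemma rearr1 (x y : V n) : x + x + y = y := by rw [vadd_self, zero_add]
lemma rearr2 (x y : V n) : x + y + x = y := by rw [show x + y + x = x + x + y from by abel, rearr1]
lemma rearr3 (x y : V n) : x + y + y = x := by rw [add_assoc, vadd_self, add_zero]

lemma distinct_of_mem (F : V n → V n) (a b : V n) (hb : b ≠ F a) (x y z : V n)
    (h1 : x + y + z = a) (h2 : F x + F y + F z = b) :
    x ≠ y ∧ x ≠ z ∧ y ≠ z := by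
  refine ⟨?_, ?_, ?_⟩
  · rintro rfl
    rw [rearr1] at h1 h2
    exact hb (by rw [← h2, h1])
  · rintro rfl
    rw [rearr2] at h1 h2
    exact hb (by rw [← h2, h1])
  · rintro rfl
    rw [rearr3] at h1 h2
    exact hb (by rw [← h2, h1])


set_option maxHeartbeats 1000000 in
def gmap (F : V n → V n) (p : V n × V n × V n) : Finset (V n × V n) :=
  {(p.1, F p.1), (p.2.1, F p.2.1), (p.2.2, F p.2.2)}

lemma gmap_eq (F : V n → V n) (x y z : V n) :
    gmap F (x, y, z) = {(x, F x), (y, F y), (z, F z)} := rfl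

set_option maxHeartbeats 1000000 in
lemma six_count (F : V n → V n) (a b : V n) (hb : b ≠ F a) :
    (Finset.univ.filter (fun p : V n × V n × V n =>
        p.1 + p.2.1 + p.2.2 = a ∧ F p.1 + F p.2.1 + F p.2.2 = b)).card
    = 6 * excMult (graphF F) (a, b) := by
  set Tri : Finset (V n × V n × V n) := Finset.univ.filter (fun p : V n × V n × V n =>
        p.1 + p.2.1 + p.2.2 = a ∧ F p.1 + F p.2.1 + F p.2.2 = b) with hTri
  set Sub : Finset (Finset (V n × V n)) :=
    ((graphF F).powersetCard 3).filter (fun T => T.sum id = (a, b)) with hSub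
  have hexc : excMult (graphF F) (a, b) = Sub.card := rfl
  have hmem_graph : ∀ x : V n, (x, F x) ∈ graphF F :=
    fun x => Finset.mem_image.mpr ⟨x, Finset.mem_univ x, rfl⟩
  have hmap : ∀ p ∈ Tri, gmap F p ∈ Sub := by
    rintro ⟨x, y, z⟩ hp
    obtain ⟨-, h1, h2⟩ := Finset.mem_filter.mp hp
    obtain ⟨hxy, hxz, hyz⟩ := distinct_of_mem F a b hb x y z h1 h2
    rw [gmap_eq]
    have c1 : ((x, F x) : V n × V n) ∉ ({(y, F y), (z, F z)} : Finset (V n × V n)) := by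
      simp only [Finset.mem_insert, Finset.mem_singleton, Prod.mk.injEq, not_or]
      exact ⟨fun h => hxy h.1, fun h => hxz h.1⟩
    have c2 : ((y, F y) : V n × V n) ∉ ({(z, F z)} : Finset (V n × V n)) := by
      simp only [Finset.mem_singleton, Prod.mk.injEq]
      exact fun h => hyz h.1
    refine Finset.mem_filter.mpr ⟨Finset.mem_powersetCard.mpr ⟨?_, ?_⟩, ?_⟩
    · intro w hw
      simp only [Finset.mem_insert, Finset.mem_singleton] at hw
      rcases hw with rfl | rfl | rfl <;> exact hmem_graph _
    · rw [Finset.card_insert_of_notMem c1, Finset.card_insert_of_notMem c2,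
        Finset.card_singleton]
    · rw [Finset.sum_insert c1, Finset.sum_insert c2, Finset.sum_singleton]
      simp only [id]
      rw [Prod.ext_iff]
      constructor
      · simpa [← add_assoc] using h1
      · simpa [← add_assoc] using h2
  have hfiber : ∀ t ∈ Sub, (Tri.filter (fun p => gmap F p = t)).card = 6 := by
    intro t ht
    obtain ⟨hts, hsum⟩ := Finset.mem_filter.mp ht
    obtain ⟨hsub, hcard⟩ := Finset.mem_powersetCard.mp hts
    obtain ⟨P, Q, R, hPQ, hPR, hQR, rfl⟩ := Finset.card_eq_three.mp hcard
    obtain ⟨p, -, rfl⟩ := Finset.mem_image.mp (hsub (by simp : P ∈ ({P, Q, R} : Finset _)))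
    obtain ⟨q, -, rfl⟩ := Finset.mem_image.mp (hsub (by simp : Q ∈ ({(p, F p), Q, R} : Finset _)))
    obtain ⟨r, -, rfl⟩ := Finset.mem_image.mp
      (hsub (by simp : R ∈ ({(p, F p), (q, F q), R} : Finset _)))
    have hpq : p ≠ q := fun h => hPQ (by rw [h])
    have hpr : p ≠ r := fun h => hPR (by rw [h])
    have hqr : q ≠ r := fun h => hQR (by rw [h])
    have hqp := hpq.symm
    have hrp := hpr.symm
    have hrq := hqr.symm
    have c1 : ((p, F p) : V n × V n) ∉ ({(q, F q), (r, F r)} : Finset (V n × V n)) := by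
      simp [hPQ, hPR]
    have c2 : ((q, F q) : V n × V n) ∉ ({(r, F r)} : Finset (V n × V n)) := by
      simp [hQR]
    rw [Finset.sum_insert c1, Finset.sum_insert c2, Finset.sum_singleton] at hsum
    simp only [id, Prod.mk_add_mk, Prod.mk.injEq] at hsum
    obtain ⟨hsa, hsb⟩ := hsum
    have hE : Tri.filter (fun p' => gmap F p' = {(p, F p), (q, F q), (r, F r)})
        = ({(p, (q, r)), (p, (r, q)), (q, (p, r)), (q, (r, p)), (r, (p, q)), (r, (q, p))} :
            Finset (V n × V n × V n)) := by
      ext ⟨x, y, z⟩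
      simp only [Finset.mem_filter, hTri, Finset.mem_univ, true_and, Finset.mem_insert,
        Finset.mem_singleton, Prod.mk.injEq, gmap_eq]
      constructor
      · rintro ⟨⟨h1, h2⟩, hgt⟩
        obtain ⟨hxy, hxz, hyz⟩ := distinct_of_mem F a b hb x y z h1 h2
        have hget : ∀ w : V n, (w, F w) ∈ ({(x, F x), (y, F y), (z, F z)} : Finset (V n × V n)) →
            w = p ∨ w = q ∨ w = r := by
          intro w hw
          rw [hgt] at hw
          simp only [Finset.mem_insert, Finset.mem_singleton, Prod.mk.injEq] at hw
          rcases hw with ⟨h, -⟩ | ⟨h, -⟩ | ⟨h, -⟩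
          · exact Or.inl h
          · exact Or.inr (Or.inl h)
          · exact Or.inr (Or.inr h)
        have hx := hget x (by simp)
        have hy := hget y (by simp)
        have hz := hget z (by simp)
        rcases hx with rfl | rfl | rfl <;> rcases hy with rfl | rfl | rfl <;>
          rcases hz with rfl | rfl | rfl <;> simp_all
      · intro h
        have hperm : ∀ x' y' z' : V n, x' + y' + z' = p + q + r →
            F x' + F y' + F z' = F p + F q + F r →
            ({(x', F x'), (y', F y'), (z', F z')} : Finset (V n × V n))
              = {(p, F p), (q, F q), (r, F r)} →
            ((x' + y' + z' = a ∧ F x' + F y' + F z' = b) ∧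
              ({(x', F x'), (y', F y'), (z', F z')} : Finset (V n × V n))
                = {(p, F p), (q, F q), (r, F r)}) := by
          intro x' y' z' e1 e2 e3
          exact ⟨⟨by rw [e1, ← hsa]; abel, by rw [e2, ← hsb]; abel⟩, e3⟩
        clear hmap ht hts hsub hcard c1 c2 hexc hmem_graph hb
        rcases h with ⟨rfl, rfl, rfl⟩ | ⟨rfl, rfl, rfl⟩ | ⟨rfl, rfl, rfl⟩ |
          ⟨rfl, rfl, rfl⟩ | ⟨rfl, rfl, rfl⟩ | ⟨rfl, rfl, rfl⟩ <;>
          exact hperm _ _ _ (by abel) (by abel)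
            (by ext w; simp only [Finset.mem_insert, Finset.mem_singleton]; try tauto)
    rw [hE]
    have n1 : ((p, (q, r)) : V n × V n × V n) ∉
        ({(p, (r, q)), (q, (p, r)), (q, (r, p)), (r, (p, q)), (r, (q, p))} :
          Finset (V n × V n × V n)) := by
      simp [Prod.ext_iff, hpq, hpr, hqr, hqp, hrp, hrq]
    have n2 : ((p, (r, q)) : V n × V n × V n) ∉
        ({(q, (p, r)), (q, (r, p)), (r, (p, q)), (r, (q, p))} :
          Finset (V n × V n × V n)) := by
      simp [Prod.ext_iff, hpq, hpr, hqr, hqp, hrp, hrq]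
    have n3 : ((q, (p, r)) : V n × V n × V n) ∉
        ({(q, (r, p)), (r, (p, q)), (r, (q, p))} : Finset (V n × V n × V n)) := by
      simp [Prod.ext_iff, hpq, hpr, hqr, hqp, hrp, hrq]
    have n4 : ((q, (r, p)) : V n × V n × V n) ∉
        ({(r, (p, q)), (r, (q, p))} : Finset (V n × V n × V n)) := by
      simp [Prod.ext_iff, hpq, hpr, hqr, hqp, hrp, hrq]
    have n5 : ((r, (p, q)) : V n × V n × V n) ∉
        ({(r, (q, p))} : Finset (V n × V n × V n)) := by
      simp [Prod.ext_iff, hpq, hpr, hqr, hqp, hrp, hrq]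
    rw [Finset.card_insert_of_notMem n1, Finset.card_insert_of_notMem n2,
      Finset.card_insert_of_notMem n3, Finset.card_insert_of_notMem n4,
      Finset.card_insert_of_notMem n5, Finset.card_singleton]
  rw [hexc]
  rw [Finset.card_eq_sum_card_fiberwise hmap]
  rw [Finset.sum_congr rfl hfiber, Finset.sum_const, smul_eq_mul, mul_comm]

end Aux


/-- Let `F : 𝔽₂ⁿ → 𝔽₂ⁿ` be an APN plateaued function all of whose component
functions are unbalanced. Then for all `a, α, b` with `b ≠ F a`,
`d_{G_F}(a, b) = d_{G_F}(α, b + F a + F α)`; i.e., `d_{G_F}` is uniform on the partition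
`{Q_a(F) : a ∈ 𝔽₂ⁿ}` of the complement of the graph, where `Q_a(F) = {a} × (𝔽₂ⁿ ∖ {F a})`. -/
theorem plateaued_unbalanced_uniform_exclude (n : ℕ) (F : V n → V n) (hF : IsAPN F)
    (hplateaued : ∀ v : V n, ∃ lam : ℤ, 0 ≤ lam ∧
      ∀ u : V n, walsh F u v = 0 ∨ walsh F u v = lam ∨ walsh F u v = -lam)
    (hunbalanced : ∀ v : V n, v ≠ 0 → walsh F 0 v ≠ 0)
    (a α b : V n) (hb : b ≠ F a) :
    excMult (graphF F) (a, b) = excMult (graphF F) (α, b + F a + F α) := by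
  have hb' : b + F a + F α ≠ F α := by
    intro h
    apply hb
    have h2 : b + F a = 0 := by
      have h3 : b + F a + F α = 0 + F α := by rw [h, zero_add]
      exact add_right_cancel h3
    exact (Aux.vadd_eq_zero_iff _ _).mp h2
  have e1 := Aux.six_count F a b hb
  have e2 := Aux.six_count F α (b + F a + F α) hb'
  have e3 := Aux.count_eq F hplateaued a b α (b + F a + F α)
    (Aux.rearr3 (b + F a) (F α)).symm
  omega
end
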